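/- For every hypothesis h ∈ H and every index j ∈ {1, …, n}, |ε_j(h) − (1/n) Σ_{i=1}^n ε_i(h)| ≤ 2( ε_j* + (1/n) Σ_{i=1}^n ε_i* ) + ε_j(h*) + β + (1/n) Σ_{i=1}^n ( d_H(D_i^X, D_j^X) + (1/2) d_{HΔH}(D_i^X, D_j^X) ), where β = Σ_{j=1}^n ε_j(h*) = min_{h∈H} Σ_{j=1}^n ε_j(h). -/

import Mathlib

open MeasureTheory

/-- Risk of hypothesis `h` under a distribution `D` on `X × {0,1}`:
`ε_D(h) = P_{(x,y)~D}(h(x) ≠ y)`. -/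
noncomputable def risk {X : Type*} [MeasurableSpace X] (D : Measure (X × Bool)) (h : X → Bool) : ℝ :=
  (D {p | h p.1 ≠ p.2}).toReal

/-- Disagreement `E_{x~μ} |h(x) − h'(x)|` of two `{0,1}`-valued hypotheses under `μ`. -/
noncomputable def disag {X : Type*} [MeasurableSpace X] (μ : Measure X) (h h' : X → Bool) : ℝ :=
  (μ {x | h x ≠ h' x}).toReal

/-- `H`-divergence `d_H(μ, ν) = 2 sup_{h ∈ H} |P_μ(h = 1) − P_ν(h = 1)|`. -/
noncomputable def Hdiv {X : Type*} [MeasurableSpace X] (H : Set (X → Bool)) (μ ν : Measure X) : ℝ :=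
  2 * ⨆ h ∈ H, |(μ {x | h x = true}).toReal - (ν {x | h x = true}).toReal|

/-- Symmetric-difference divergence
`d_{HΔH}(μ, ν) = 2 sup_{h,h' ∈ H} |P_μ(h ≠ h') − P_ν(h ≠ h')|`. -/
noncomputable def HDHdiv {X : Type*} [MeasurableSpace X] (H : Set (X → Bool)) (μ ν : Measure X) : ℝ :=
  2 * ⨆ h ∈ H, ⨆ h' ∈ H, |(μ {x | h x ≠ h' x}).toReal - (ν {x | h x ≠ h' x}).toReal|

/-- Marginal `D^X` on `X` of a distribution on `X × {0,1}`. -/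
noncomputable def marg {X : Type*} [MeasurableSpace X] (D : Measure (X × Bool)) : Measure X :=
  D.map Prod.fst


section Aux
variable {X : Type*} [MeasurableSpace X]

lemma ne_set_meas {h h' : X → Bool} (mh : Measurable h) (mh' : Measurable h') :
    MeasurableSet {x | h x ≠ h' x} := by
  exact (measurableSet_eq_fun mh mh').compl

lemma toReal_subadd (D : Measure (X × Bool)) [IsProbabilityMeasure D]
    {A B C : Set (X × Bool)} (hsub : A ⊆ B ∪ C) :
    (D A).toReal ≤ (D B).toReal + (D C).toReal := by
  have h1 : D A ≤ D B + D C := (measure_mono hsub).trans (measure_union_le B C)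
  have := ENNReal.toReal_mono (a := D A) (by finiteness) h1
  rwa [ENNReal.toReal_add (measure_ne_top D B) (measure_ne_top D C)] at this

lemma marg_disag (D : Measure (X × Bool)) {h h' : X → Bool}
    (mh : Measurable h) (mh' : Measurable h') :
    disag (marg D) h h' = (D {p | h p.1 ≠ h' p.1}).toReal := by
  unfold disag marg
  rw [Measure.map_apply measurable_fst (ne_set_meas mh mh')]
  rfl

lemma risk_tri (D : Measure (X × Bool)) [IsProbabilityMeasure D] {h h' : X → Bool}
    (mh : Measurable h) (mh' : Measurable h') :
    risk D h ≤ risk D h' + disag (marg D) h h' := by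
  rw [marg_disag D mh mh']
  exact toReal_subadd D (fun p hp => by
    by_cases hb : h' p.1 = p.2
    · exact Or.inr (fun hc => hp (hc.trans hb))
    · exact Or.inl hb)

lemma disag_tri (D : Measure (X × Bool)) [IsProbabilityMeasure D] {h h' : X → Bool}
    (mh : Measurable h) (mh' : Measurable h') :
    disag (marg D) h h' ≤ risk D h + risk D h' := by
  rw [marg_disag D mh mh']
  exact toReal_subadd D (fun p hp => by
    by_cases hb : h p.1 = p.2
    · exact Or.inr (fun hc => hp (hb.trans hc.symm))
    · exact Or.inl hb)

lemma Hdiv_nonneg (H : Set (X → Bool)) (μ ν : Measure X) : 0 ≤ Hdiv H μ ν := by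
  unfold Hdiv
  refine mul_nonneg (by norm_num) ?_
  exact Real.iSup_nonneg fun h => Real.iSup_nonneg fun _ => abs_nonneg _

lemma HDHdiv_bound (H : Set (X → Bool)) (μ ν : Measure X)
    [IsProbabilityMeasure μ] [IsProbabilityMeasure ν]
    {h h' : X → Bool} (hh : h ∈ H) (hh' : h' ∈ H) :
    |(μ {x | h x ≠ h' x}).toReal - (ν {x | h x ≠ h' x}).toReal| ≤
      (1 / 2) * HDHdiv H μ ν := by
  have key : ∀ (g g' : X → Bool),
      |(μ {x | g x ≠ g' x}).toReal - (ν {x | g x ≠ g' x}).toReal| ≤ 1 := by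
    intro g g'
    have h1 : (μ {x | g x ≠ g' x}).toReal ≤ 1 := by
      have := prob_le_one (μ := μ) (s := {x | g x ≠ g' x})
      simpa using ENNReal.toReal_mono (by norm_num) this
    have h2 : (ν {x | g x ≠ g' x}).toReal ≤ 1 := by
      have := prob_le_one (μ := ν) (s := {x | g x ≠ g' x})
      simpa using ENNReal.toReal_mono (by norm_num) this
    rw [abs_sub_le_iff]
    constructor <;> nlinarith [ENNReal.toReal_nonneg (a := μ {x | g x ≠ g' x}),
      ENNReal.toReal_nonneg (a := ν {x | g x ≠ g' x})]
  set F : (X → Bool) → (X → Bool) → ℝ := fun g g' =>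
    |(μ {x | g x ≠ g' x}).toReal - (ν {x | g x ≠ g' x}).toReal| with hF
  have inner : ∀ g, (⨆ g' ∈ H, F g g') ≤ 1 := fun g =>
    Real.iSup_le (fun g' => Real.iSup_le (fun _ => key g g') (by norm_num)) (by norm_num)
  have step1 : F h h' ≤ ⨆ g' ∈ H, F h g' := by
    have s0 : F h h' ≤ ⨆ (_ : h' ∈ H), F h h' :=
      le_ciSup (f := fun _ : h' ∈ H => F h h') ⟨F h h', by rintro x ⟨_, rfl⟩; exact le_rfl⟩ hh'
    exact s0.trans (le_ciSup (f := fun g' => ⨆ (_ : g' ∈ H), F h g')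
      ⟨1, by rintro x ⟨g', rfl⟩
             exact Real.iSup_le (fun _ => key h g') (by norm_num)⟩ h')
  have step2 : (⨆ g' ∈ H, F h g') ≤ ⨆ g ∈ H, ⨆ g' ∈ H, F g g' := by
    have s0 : (⨆ g' ∈ H, F h g') ≤ ⨆ (_ : h ∈ H), ⨆ g' ∈ H, F h g' :=
      le_ciSup (f := fun _ : h ∈ H => ⨆ g' ∈ H, F h g')
        ⟨_, by rintro x ⟨_, rfl⟩; exact le_rfl⟩ hh
    exact s0.trans (le_ciSup (f := fun g => ⨆ (_ : g ∈ H), ⨆ g' ∈ H, F g g')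
      ⟨1, by rintro x ⟨g, rfl⟩
             exact Real.iSup_le (fun _ => inner g) (by norm_num)⟩ h)
  have := step1.trans step2
  unfold HDHdiv
  linarith

end Aux
theorem classifier_imbalance_bound_HdH {X : Type*} [MeasurableSpace X]
    (H : Set (X → Bool)) (hHne : H.Nonempty) (hHmeas : ∀ h ∈ H, Measurable h)
    (n : ℕ) (hn : 0 < n)
    (D : Fin n → Measure (X × Bool)) (hD : ∀ i, IsProbabilityMeasure (D i))
    (hstar : Fin n → (X → Bool)) (hstar_mem : ∀ i, hstar i ∈ H)
    (hstar_min : ∀ i, ∀ g ∈ H, risk (D i) (hstar i) ≤ risk (D i) g)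
    (hstarAll : X → Bool) (hstarAll_mem : hstarAll ∈ H)
    (hstarAll_min : ∀ g ∈ H, ∑ k, risk (D k) hstarAll ≤ ∑ k, risk (D k) g)
    (h : X → Bool) (hh : h ∈ H) (j : Fin n) :
    |risk (D j) h - (1 / (n : ℝ)) * ∑ i, risk (D i) h| ≤
      2 * (risk (D j) (hstar j) + (1 / (n : ℝ)) * ∑ i, risk (D i) (hstar i)) +
      risk (D j) hstarAll + (∑ k, risk (D k) hstarAll) +
      (1 / (n : ℝ)) * ∑ i, (Hdiv H (marg (D i)) (marg (D j)) +
        (1 / 2) * HDHdiv H (marg (D i)) (marg (D j))) := by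
  have mh := hHmeas h hh
  have mA := hHmeas hstarAll hstarAll_mem
  haveI : ∀ i, IsProbabilityMeasure (D i) := hD
  haveI margP : ∀ i, IsProbabilityMeasure (marg (D i)) := fun i =>
    Measure.isProbabilityMeasure_map measurable_fst.aemeasurable
  have hn' : (0 : ℝ) < n := by exact_mod_cast hn
  have hninv : (0 : ℝ) ≤ 1 / n := by positivity
  have key : ∀ i, |risk (D j) h - risk (D i) h| ≤
      risk (D j) hstarAll + risk (D i) hstarAll +
      (1 / 2) * HDHdiv H (marg (D i)) (marg (D j)) := by
    intro i
    have t1 := risk_tri (D j) mh mA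
    have t2 := disag_tri (D j) mh mA
    have t3 := risk_tri (D i) mh mA
    have t4 := disag_tri (D i) mh mA
    have hd : |disag (marg (D i)) h hstarAll - disag (marg (D j)) h hstarAll| ≤
        (1 / 2) * HDHdiv H (marg (D i)) (marg (D j)) := by
      simpa [disag] using HDHdiv_bound H (marg (D i)) (marg (D j)) hh hstarAll_mem
    rw [abs_sub_le_iff] at hd ⊢
    constructor <;> [linarith [hd.2]; linarith [hd.1]]
  have expand : risk (D j) h - (1 / (n : ℝ)) * ∑ i, risk (D i) h =
      (1 / (n : ℝ)) * ∑ i, (risk (D j) h - risk (D i) h) := by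
    rw [Finset.sum_sub_distrib, Finset.sum_const, Finset.card_univ, Fintype.card_fin]
    field_simp
    ring
  have habs : |risk (D j) h - (1 / (n : ℝ)) * ∑ i, risk (D i) h| ≤
      (1 / (n : ℝ)) * ∑ i, (risk (D j) hstarAll + risk (D i) hstarAll +
        (1 / 2) * HDHdiv H (marg (D i)) (marg (D j))) := by
    rw [expand, abs_mul, abs_of_nonneg hninv]
    refine mul_le_mul_of_nonneg_left ?_ hninv
    exact (Finset.abs_sum_le_sum_abs _ _).trans (Finset.sum_le_sum fun i _ => key i)
  have hsum : (1 / (n : ℝ)) * ∑ i, (risk (D j) hstarAll + risk (D i) hstarAll +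
        (1 / 2) * HDHdiv H (marg (D i)) (marg (D j))) =
      risk (D j) hstarAll + (1 / (n : ℝ)) * ∑ i, risk (D i) hstarAll +
        (1 / (n : ℝ)) * ∑ i, (1 / 2) * HDHdiv H (marg (D i)) (marg (D j)) := by
    rw [Finset.sum_add_distrib, Finset.sum_add_distrib, Finset.sum_const,
      Finset.card_univ, Fintype.card_fin]
    field_simp
    ring
  rw [hsum] at habs
  have h2 : (1 / (n : ℝ)) * ∑ i, risk (D i) hstarAll ≤ ∑ k, risk (D k) hstarAll := by
    have hpos : (0:ℝ) ≤ ∑ k, risk (D k) hstarAll :=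
      Finset.sum_nonneg fun k _ => ENNReal.toReal_nonneg
    have : (1 : ℝ) / n ≤ 1 := by
      rw [div_le_one hn']; exact_mod_cast hn
    nlinarith
  have h3 : (0:ℝ) ≤ risk (D j) (hstar j) := ENNReal.toReal_nonneg
  have h4 : (0:ℝ) ≤ (1 / (n : ℝ)) * ∑ i, risk (D i) (hstar i) :=
    mul_nonneg hninv (Finset.sum_nonneg fun i _ => ENNReal.toReal_nonneg)
  have h5 : (1 / (n : ℝ)) * ∑ i, (1 / 2) * HDHdiv H (marg (D i)) (marg (D j)) ≤
      (1 / (n : ℝ)) * ∑ i, (Hdiv H (marg (D i)) (marg (D j)) +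
        (1 / 2) * HDHdiv H (marg (D i)) (marg (D j))) := by
    refine mul_le_mul_of_nonneg_left (Finset.sum_le_sum fun i _ => ?_) hninv
    have := Hdiv_nonneg H (marg (D i)) (marg (D j))
    linarith
  linarith
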